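/- Assume M is symmetric positive definite, all eigenvalues of M lie in an interval [a, b] with 0, 1 ∉ [a, b], and m < p − 1. Then the aNGMRES(m, p) iterates from any u₀ satisfy ‖r_{jp}‖ ≤ (ε(a, b, m+1) · ‖M‖^p)^j · ‖r₀‖ for all j ≥ 1. -/

import Mathlib

open Matrix Polynomial Set

noncomputable section

/-- Matrix–vector product, landing in Euclidean space. -/
def mulVecE {n : ℕ} (M : Matrix (Fin n) (Fin n) ℝ) (v : EuclideanSpace ℝ (Fin n)) :
    EuclideanSpace ℝ (Fin n) :=
  WithLp.toLp 2 (M.mulVec v)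

/-- Residual `r(u) = A u - b`. -/
def res {n : ℕ} (A : Matrix (Fin n) (Fin n) ℝ) (b u : EuclideanSpace ℝ (Fin n)) :
    EuclideanSpace ℝ (Fin n) :=
  mulVecE A u - b

/-- Richardson fixed-point map `q(u) = (I - A) u + b = M u + b` with `M = I - A`. -/
def fp {n : ℕ} (A : Matrix (Fin n) (Fin n) ℝ) (b u : EuclideanSpace ℝ (Fin n)) :
    EuclideanSpace ℝ (Fin n) :=
  mulVecE (1 - A) u + b

/-- The NGMRES(m) least-squares objective at step `k`:
`β ↦ ‖r(q(u_k)) + Σ_{i=0}^m β_i (r(q(u_k)) - r(u_{k-i}))‖`. -/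
def ngObj {n : ℕ} (A : Matrix (Fin n) (Fin n) ℝ) (b : EuclideanSpace ℝ (Fin n))
    (m : ℕ) (prev : ℕ → EuclideanSpace ℝ (Fin n)) (k : ℕ) (β : Fin (m+1) → ℝ) : ℝ :=
  ‖res A b (fp A b (prev k)) +
    ∑ i : Fin (m+1), β i • (res A b (fp A b (prev k)) - res A b (prev (k - (i : ℕ))))‖

/-- `next` is produced from `prev (k-m), …, prev k` by a single NGMRES(m) step:
`next = q(u_k) + Σ_{i=0}^m β_i (q(u_k) - u_{k-i})` where `β` minimizes the
least-squares objective `ngObj`. -/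
def NGMRESStep {n : ℕ} (A : Matrix (Fin n) (Fin n) ℝ) (b : EuclideanSpace ℝ (Fin n))
    (m : ℕ) (prev : ℕ → EuclideanSpace ℝ (Fin n)) (k : ℕ)
    (next : EuclideanSpace ℝ (Fin n)) : Prop :=
  ∃ β : Fin (m+1) → ℝ,
    (∀ γ : Fin (m+1) → ℝ, ngObj A b m prev k β ≤ ngObj A b m prev k γ) ∧
    next = fp A b (prev k) +
      ∑ i : Fin (m+1), β i • (fp A b (prev k) - prev (k - (i : ℕ)))

/-- The spectral (ℓ²-operator) norm of a matrix. -/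
def opNorm {n : ℕ} (M : Matrix (Fin n) (Fin n) ℝ) : ℝ :=
  ‖(Matrix.toEuclideanCLM (𝕜 := ℝ) M : EuclideanSpace ℝ (Fin n) →L[ℝ] EuclideanSpace ℝ (Fin n))‖

/-- The 2-norm condition number `κ₂(U) = ‖U‖ ‖U⁻¹‖`. -/
def condNum {n : ℕ} (U : Matrix (Fin n) (Fin n) ℝ) : ℝ :=
  opNorm U * opNorm U⁻¹

/-- `ε(a,b,s)`: minimum over real polynomials `p` of degree at most `s` with `p(1) = 1`
of `max_{t ∈ [1/b, 1/a]} |p(t)|`. -/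
def eps (a b : ℝ) (s : ℕ) : ℝ :=
  sInf {t : ℝ | ∃ p : Polynomial ℝ, p.natDegree ≤ s ∧ p.eval 1 = 1 ∧
    t = sSup ((fun x => |p.eval x|) '' Set.Icc (1/b) (1/a))}

/-- `χ(s)`: minimum over real polynomials `p` of degree at most `s` with `p(1) = 1`
of `max_{λ ∈ Σ(M)} |p(λ)|`, where `Σ(M)` is the set of eigenvalues of `M`. -/
def chiSp {n : ℕ} (M : Matrix (Fin n) (Fin n) ℝ) (s : ℕ) : ℝ :=
  sInf {t : ℝ | ∃ p : Polynomial ℝ, p.natDegree ≤ s ∧ p.eval 1 = 1 ∧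
    t = sSup ((fun x => |p.eval x|) '' spectrum ℝ M)}

/-- The Krylov subspace `K_k(A, r) = span{r, Ar, …, A^{k-1} r}`. -/
def Krylov {n : ℕ} (A : Matrix (Fin n) (Fin n) ℝ) (r : EuclideanSpace ℝ (Fin n)) (k : ℕ) :
    Submodule ℝ (EuclideanSpace ℝ (Fin n)) :=
  Submodule.span ℝ (Set.range fun i : Fin k => mulVecE (A ^ (i : ℕ)) r)

/-- The matrix `S_k = [u_{k-m+1}-u_{k-m}, …, u_k-u_{k-1}, q(u_k)-u_k] ∈ ℝ^{n×(m+1)}`. -/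
def Smat {n : ℕ} (A : Matrix (Fin n) (Fin n) ℝ) (b : EuclideanSpace ℝ (Fin n))
    (prev : ℕ → EuclideanSpace ℝ (Fin n)) (k m : ℕ) :
    Matrix (Fin n) (Fin (m+1)) ℝ :=
  Matrix.of fun r c =>
    if (c : ℕ) < m then prev (k - m + c + 1) r - prev (k - m + c) r
    else fp A b (prev k) r - prev k r

/-- `u` is the sequence of aNGMRES(m, p) iterates (with `m = ⊤` giving aNGMRES(∞, p)):
if `p ∤ k` then `u_k = q(u_{k-1})`, and if `p ∣ k` then `u_k` is produced by one
NGMRES(min(m, k-1)) step from `u_{k-1-m_k}, …, u_{k-1}`. -/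
def aNGMRES {n : ℕ} (A : Matrix (Fin n) (Fin n) ℝ) (b : EuclideanSpace ℝ (Fin n))
    (m : ℕ∞) (p : ℕ) (u : ℕ → EuclideanSpace ℝ (Fin n)) : Prop :=
  ∀ k, 1 ≤ k →
    (¬ p ∣ k → u k = fp A b (u (k-1))) ∧
    (p ∣ k → NGMRESStep A b (min m ((k : ℕ∞) - 1)).toNat u (k-1) (u k))

lemma mulVecE_eq {n : ℕ} (X : Matrix (Fin n) (Fin n) ℝ) (v : EuclideanSpace ℝ (Fin n)) :
    mulVecE X v = Matrix.toEuclideanCLM (𝕜 := ℝ) X v := rfl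

lemma eigen_apply {n : ℕ} {M : Matrix (Fin n) (Fin n) ℝ} (hM : M.IsHermitian) (i : Fin n) :
    mulVecE M (hM.eigenvectorBasis i) = hM.eigenvalues i • hM.eigenvectorBasis i :=
  by rw [mulVecE, hM.mulVec_eigenvectorBasis]; rfl

lemma pow_eigen {n : ℕ} {M : Matrix (Fin n) (Fin n) ℝ} (hM : M.IsHermitian) (k : ℕ) (i : Fin n) :
    mulVecE (M ^ k) (hM.eigenvectorBasis i) = hM.eigenvalues i ^ k • hM.eigenvectorBasis i := by
  induction k with
  | zero => simp [mulVecE_eq]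
  | succ k ih =>
    rw [pow_succ', mulVecE_eq, _root_.map_mul, ContinuousLinearMap.mul_apply, ← mulVecE_eq,
      ← mulVecE_eq, ih, mulVecE_eq, _root_.map_smul, ← mulVecE_eq, eigen_apply, smul_smul, pow_succ',
      mul_comm, ← smul_smul]

lemma aeval_eigen {n : ℕ} {M : Matrix (Fin n) (Fin n) ℝ} (hM : M.IsHermitian)
    (P : Polynomial ℝ) (i : Fin n) :
    mulVecE (Polynomial.aeval M P) (hM.eigenvectorBasis i)
      = P.eval (hM.eigenvalues i) • hM.eigenvectorBasis i := by
  induction P using Polynomial.induction_on' with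
  | add p q hp hq =>
    rw [map_add, mulVecE_eq, map_add, ContinuousLinearMap.add_apply, ← mulVecE_eq, ← mulVecE_eq,
      hp, hq, eval_add, add_smul]
  | monomial k a =>
    rw [Polynomial.aeval_monomial, mulVecE_eq, _root_.map_mul, ContinuousLinearMap.mul_apply,
      ← mulVecE_eq, ← mulVecE_eq, pow_eigen, mulVecE_eq, _root_.map_smul,
      AlgHomClass.commutes, Polynomial.eval_monomial]
    simp [Algebra.algebraMap_eq_smul_one, smul_smul, mul_comm]

lemma norm_aeval_le {n : ℕ} {M : Matrix (Fin n) (Fin n) ℝ} (hM : M.IsHermitian)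
    (P : Polynomial ℝ) {C : ℝ} (hC : 0 ≤ C)
    (h : ∀ i : Fin n, |P.eval (hM.eigenvalues i)| ≤ C) (v : EuclideanSpace ℝ (Fin n)) :
    ‖mulVecE (Polynomial.aeval M P) v‖ ≤ C * ‖v‖ := by
  set B := hM.eigenvectorBasis
  set w := mulVecE (Polynomial.aeval M P) v with hw
  have hwsum : w = ∑ j, (P.eval (hM.eigenvalues j) * B.repr v j) • B j := by
    conv_lhs => rw [hw, ← B.sum_repr v]
    rw [mulVecE_eq, map_sum]
    refine Finset.sum_congr rfl fun j _ => ?_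
    rw [_root_.map_smul, ← mulVecE_eq, aeval_eigen, smul_smul, mul_comm]
  have hrepr : ∀ i, B.repr w i = P.eval (hM.eigenvalues i) * B.repr v i := by
    intro i
    rw [B.repr_apply_apply, hwsum, B.orthonormal.inner_right_fintype]
  have h1 : ‖w‖ ^ 2 ≤ (C * ‖v‖) ^ 2 := by
    have e1 : ‖w‖ = ‖B.repr w‖ := (B.repr.norm_map w).symm
    have e2 : ‖v‖ = ‖B.repr v‖ := (B.repr.norm_map v).symm
    rw [e1, e2, EuclideanSpace.norm_eq, EuclideanSpace.norm_eq, mul_pow,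
      Real.sq_sqrt (by positivity), Real.sq_sqrt (by positivity), Finset.mul_sum]
    refine Finset.sum_le_sum fun i _ => ?_
    rw [hrepr i]
    have := h i
    have h2 : ‖P.eval (hM.eigenvalues i) * B.repr v i‖ ≤ C * ‖B.repr v i‖ := by
      rw [norm_mul]
      exact mul_le_mul_of_nonneg_right (by rwa [Real.norm_eq_abs]) (norm_nonneg _)
    calc ‖P.eval (hM.eigenvalues i) * B.repr v i‖ ^ 2 ≤ (C * ‖B.repr v i‖) ^ 2 := by
          exact pow_le_pow_left₀ (norm_nonneg _) h2 2
      _ = C ^ 2 * ‖B.repr v i‖ ^ 2 := by ring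
  have := Real.sqrt_le_sqrt h1
  rwa [Real.sqrt_sq (norm_nonneg _), Real.sqrt_sq (by positivity)] at this

section Aux
variable {n : ℕ} {A : Matrix (Fin n) (Fin n) ℝ} {b : EuclideanSpace ℝ (Fin n)}

lemma res_fp (w : EuclideanSpace ℝ (Fin n)) :
    res A b (fp A b w) = mulVecE (1 - A) (res A b w) := by
  simp only [res, fp, mulVecE_eq, map_sub, map_add, _root_.map_one,
    ContinuousLinearMap.sub_apply, ContinuousLinearMap.one_apply]
  abel

lemma mulVecE_mul (X Y : Matrix (Fin n) (Fin n) ℝ) (v : EuclideanSpace ℝ (Fin n)) :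
    mulVecE (X * Y) v = mulVecE X (mulVecE Y v) := by
  rw [mulVecE_eq, _root_.map_mul, ContinuousLinearMap.mul_apply, ← mulVecE_eq, ← mulVecE_eq]

lemma res_add (x y : EuclideanSpace ℝ (Fin n)) :
    res A b (x + y) = res A b x + mulVecE A y := by
  simp only [res, mulVecE_eq, map_add]
  abel

lemma res_chain {p : ℕ} {u : ℕ → EuclideanSpace ℝ (Fin n)}
    (hfix : ∀ k, 1 ≤ k → ¬ p ∣ k → u k = fp A b (u (k-1))) (j : ℕ) :
    ∀ t, t ≤ p - 1 → res A b (u (j*p + t)) = mulVecE ((1-A)^t) (res A b (u (j*p))) := by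
  intro t
  induction t with
  | zero => intro _; simp [mulVecE_eq]
  | succ t ih =>
    intro ht
    have hp1 : 1 ≤ p := by omega
    have hndvd : ¬ p ∣ (j*p + t + 1) := by
      intro hdvd
      have h2 : p ∣ t + 1 := by
        have h3 := Nat.dvd_sub hdvd (dvd_mul_left p j)
        have h4 : j * p + t + 1 - j * p = t + 1 := by omega
        rwa [h4] at h3
      have := Nat.le_of_dvd (by omega) h2
      omega
    have := hfix (j*p + t + 1) (by omega) (by rw [show j*p + t + 1 = j*p+(t+1) by ring]; exact hndvd)
    rw [show j*p + (t+1) = j*p + t + 1 by ring, this, Nat.add_sub_cancel, res_fp,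
      ih (by omega), ← mulVecE_mul, ← pow_succ']

end Aux

lemma lin_expand {n : ℕ} (W : EuclideanSpace ℝ (Fin n)) (V : ℕ → EuclideanSpace ℝ (Fin n))
    (d : ℕ → ℝ) (s : Finset ℕ) :
    W + ∑ i ∈ s, (-(d i)) • (W - V i) =
      ((1:ℝ) - ∑ i ∈ s, d i) • W + ∑ i ∈ s, d i • V i := by
  simp only [neg_smul, smul_sub, Finset.sum_neg_distrib, Finset.sum_sub_distrib,
    sub_smul, one_smul, Finset.sum_smul]
  abel

lemma step_lemma {n m p : ℕ} (hn : 0 < n) (hmp : m < p - 1) (A : Matrix (Fin n) (Fin n) ℝ)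
    (hPD : ((1 : Matrix (Fin n) (Fin n) ℝ) - A).PosDef)
    (a c : ℝ) (hac : a < c)
    (h0 : (0 : ℝ) ∉ Set.Icc a c)
    (hspec : spectrum ℝ ((1 : Matrix (Fin n) (Fin n) ℝ) - A) ⊆ Set.Icc a c)
    (b : EuclideanSpace ℝ (Fin n)) (u : ℕ → EuclideanSpace ℝ (Fin n))
    (hu : aNGMRES A b (m : ℕ∞) p u) (j : ℕ) (hj : 1 ≤ j) :
    ‖res A b (u (j * p))‖ ≤
      eps a c (m+1) * opNorm ((1 : Matrix (Fin n) (Fin n) ℝ) - A) ^ p *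
        ‖res A b (u ((j-1) * p))‖ := by
  have hp2 : m + 2 ≤ p := by omega
  set M : Matrix (Fin n) (Fin n) ℝ := 1 - A with hMdef
  have hM : M.IsHermitian := hPD.1
  have hμpos : ∀ i, 0 < hM.eigenvalues i := fun i => hPD.eigenvalues_pos i
  have hμmem : ∀ i, hM.eigenvalues i ∈ Set.Icc a c := fun i =>
    hspec (hM.eigenvalues_mem_spectrum_real i)
  have i0 : Fin n := ⟨0, hn⟩
  have ha0 : 0 < a := by
    by_contra h
    push_neg at h
    exact h0 ⟨h, le_trans (le_of_lt (hμpos i0)) (hμmem i0).2⟩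
  have hμnorm : ∀ i, hM.eigenvalues i ≤ opNorm M := by
    intro i
    have h1 : ‖mulVecE M (hM.eigenvectorBasis i)‖ ≤ opNorm M * ‖hM.eigenvectorBasis i‖ := by
      rw [mulVecE_eq]
      exact (Matrix.toEuclideanCLM (𝕜 := ℝ) M).le_opNorm _
    rw [eigen_apply, norm_smul, hM.eigenvectorBasis.orthonormal.1 i, mul_one, mul_one,
      Real.norm_eq_abs] at h1
    exact (le_abs_self _).trans h1
  have hopnonneg : (0:ℝ) ≤ opNorm M := norm_nonneg _
  -- the NGMRES step at index j*p
  have hpjp : p ≤ j * p := Nat.le_mul_of_pos_left p hj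
  have hjpe : j * p = (j-1) * p + p := by
    conv_lhs => rw [← Nat.sub_add_cancel hj]
    rw [add_mul, one_mul]
  have hjp1 : 1 ≤ j * p := by omega
  have hmle' : m ≤ j*p - 1 := by omega
  have hmineq : (min (m : ℕ∞) (((j*p : ℕ) : ℕ∞) - 1)).toNat = m := by
    have h1 : ((j*p : ℕ) : ℕ∞) - 1 = ((j*p - 1 : ℕ) : ℕ∞) := by
      rw [ENat.coe_sub, Nat.cast_one]
    have hmle : (m : ℕ∞) ≤ ((j*p - 1 : ℕ) : ℕ∞) := by exact_mod_cast hmle'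
    rw [h1, min_eq_left hmle, ENat.toNat_coe]
  have hstep := (hu (j*p) hjp1).2 (dvd_mul_left p j)
  rw [hmineq] at hstep
  set k := j * p - 1 with hkdef
  obtain ⟨β, hmin, hnext⟩ := hstep
  set ρ := res A b (u ((j-1) * p)) with hρdef
  have hfix : ∀ k', 1 ≤ k' → ¬ p ∣ k' → u k' = fp A b (u (k'-1)) :=
    fun k' h1 h2 => (hu k' h1).1 h2
  -- residuals of the previous iterates
  have hreschain : ∀ t, t ≤ p - 1 → res A b (u ((j-1)*p + t)) = mulVecE (M^t) ρ :=
    res_chain hfix (j-1)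
  have hkres : ∀ t : ℕ, t ≤ m → res A b (u (k - t)) = mulVecE (M^(p-1-t)) ρ := by
    intro t ht
    have h1 : k - t = (j-1)*p + (p-1-t) := by omega
    rw [h1]
    exact hreschain _ (by omega)
  have hkres0 : res A b (u k) = mulVecE (M^(p-1)) ρ := by
    have := hkres 0 (by omega)
    simpa using this
  have hfpres : res A b (fp A b (u k)) = mulVecE (M^p) ρ := by
    rw [res_fp, hkres0, ← hMdef, ← mulVecE_mul, ← pow_succ',
      show p - 1 + 1 = p by omega]
  -- the value being minimized equals the residual norm
  have hresdiff : ∀ x y : EuclideanSpace ℝ (Fin n),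
      res A b x - res A b y = mulVecE A x - mulVecE A y := by
    intro x y; simp only [res]; abel
  have hval : res A b (u (j*p)) = res A b (fp A b (u k)) +
      ∑ i : Fin (m+1), β i • (res A b (fp A b (u k)) - res A b (u (k - (i:ℕ)))) := by
    rw [hnext, res_add]
    congr 1
    rw [mulVecE_eq, _root_.map_sum]
    refine Finset.sum_congr rfl fun i _ => ?_
    rw [_root_.map_smul, map_sub, hresdiff, mulVecE_eq, mulVecE_eq]
  have hnorm : ‖res A b (u (j*p))‖ = ngObj A b m u k β := by rw [hval]; rfl
  -- the per-polynomial bound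
  have hq : ∀ q : Polynomial ℝ, q.natDegree ≤ m+1 → q.eval 1 = 1 →
      ‖res A b (u (j*p))‖ ≤
        sSup ((fun x => |q.eval x|) '' Set.Icc (1/c) (1/a)) * (opNorm M ^ p * ‖ρ‖) := by
    intro q hqdeg hq1
    set S := sSup ((fun x => |q.eval x|) '' Set.Icc (1/c) (1/a)) with hSdef
    have hbdd : BddAbove ((fun x => |q.eval x|) '' Set.Icc (1/c) (1/a)) :=
      (isCompact_Icc.image_of_continuousOn
        ((q.continuous.abs).continuousOn)).bddAbove
    have hSle : ∀ x ∈ Set.Icc (1/c) (1/a), |q.eval x| ≤ S :=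
      fun x hx => le_csSup hbdd (Set.mem_image_of_mem _ hx)
    -- the residual polynomial
    have hS0 : (0:ℝ) ≤ S := by
      have hmem : 1/c ∈ Set.Icc (1/c) (1/a) :=
        Set.mem_Icc.mpr ⟨le_refl _, one_div_le_one_div_of_le ha0 (le_of_lt hac)⟩
      exact le_trans (abs_nonneg _) (hSle _ hmem)
    set P : Polynomial ℝ :=
      ∑ i ∈ Finset.range (m+2), Polynomial.C (q.coeff i) * Polynomial.X ^ (p - i) with hPdef
    have hsum1 : ∑ i ∈ Finset.range (m+2), q.coeff i = 1 := by
      have := Polynomial.eval_eq_sum_range' (lt_of_le_of_lt hqdeg (Nat.lt_succ_self (m+1)))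
        (1 : ℝ)
      simpa [hq1] using this.symm
    -- evaluation identity
    have heval : ∀ x : ℝ, 0 < x → P.eval x = x^p * q.eval (1/x) := by
      intro x hx
      rw [hPdef, Polynomial.eval_finset_sum,
        Polynomial.eval_eq_sum_range' (lt_of_le_of_lt hqdeg (Nat.lt_succ_self (m+1))),
        Finset.mul_sum]
      refine Finset.sum_congr rfl fun i hi => ?_
      have hip : i ≤ p := by
        have := Finset.mem_range.mp hi
        omega
      simp only [Polynomial.eval_mul, Polynomial.eval_C, Polynomial.eval_pow, Polynomial.eval_X]
      have hxp : x ^ p = x ^ (p - i) * x ^ i := by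
        rw [← pow_add]
        congr 1
        omega
      rw [hxp]
      field_simp
      rw [mul_assoc, ← mul_pow, mul_one_div_cancel hx.ne', one_pow, mul_one]
    -- eigenvalue bound
    have hPbound : ∀ i, |P.eval (hM.eigenvalues i)| ≤ S * opNorm M ^ p := by
      intro i
      set μ := hM.eigenvalues i with hμdef
      have hμp : 0 < μ := hμpos i
      have hmem : 1/μ ∈ Set.Icc (1/c) (1/a) :=
        ⟨one_div_le_one_div_of_le hμp (hμmem i).2,
         one_div_le_one_div_of_le ha0 (hμmem i).1⟩
      have h1 : |P.eval μ| = μ^p * |q.eval (1/μ)| := by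
        rw [heval μ hμp, abs_mul, abs_of_pos (pow_pos hμp p)]
      rw [h1, mul_comm (S : ℝ)]
      exact mul_le_mul (pow_le_pow_left₀ (le_of_lt hμp) (hμnorm i) p)
        (hSle _ hmem) (abs_nonneg _) (by positivity)
    -- the candidate coefficient vector
    set γ : Fin (m+1) → ℝ := fun i => -(q.coeff ((i:ℕ)+1)) with hγdef
    have hPapply : mulVecE (Polynomial.aeval M P) ρ =
        ∑ i ∈ Finset.range (m+2), q.coeff i • mulVecE (M^(p-i)) ρ := by
      rw [hPdef, _root_.map_sum, mulVecE_eq, _root_.map_sum, ContinuousLinearMap.sum_apply]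
      refine Finset.sum_congr rfl fun i _ => ?_
      rw [_root_.map_mul, Polynomial.aeval_C, Polynomial.aeval_X_pow,
        Algebra.algebraMap_eq_smul_one, smul_mul_assoc, one_mul, _root_.map_smul,
        ContinuousLinearMap.smul_apply, ← mulVecE_eq]
    have hγval : ngObj A b m u k γ = ‖mulVecE (Polynomial.aeval M P) ρ‖ := by
      unfold ngObj
      congr 1
      have hterm : ∀ i : Fin (m+1),
          γ i • (res A b (fp A b (u k)) - res A b (u (k - (i:ℕ)))) =
            -(q.coeff ((i:ℕ)+1)) • (mulVecE (M^p) ρ - mulVecE (M^(p-1-(i:ℕ))) ρ) := by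
        intro i
        rw [hγdef, hfpres, hkres (i:ℕ) (by omega)]
      rw [Finset.sum_congr rfl (fun i _ => hterm i), hfpres, hPapply]
      conv_rhs => rw [Finset.sum_range_succ']
      rw [Fin.sum_univ_eq_sum_range
        (fun i => -(q.coeff (i+1)) • (mulVecE (M^p) ρ - mulVecE (M^(p-1-i)) ρ)) (m+1)]
      rw [lin_expand]
      have hc0 : (1:ℝ) - ∑ i ∈ Finset.range (m+1), q.coeff (i+1) = q.coeff 0 := by
        rw [Finset.sum_range_succ'] at hsum1
        linarith
      have hidx : ∑ i ∈ Finset.range (m+1), q.coeff (i+1) • mulVecE (M^(p-(i+1))) ρ =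
          ∑ i ∈ Finset.range (m+1), q.coeff (i+1) • mulVecE (M^(p-1-i)) ρ :=
        Finset.sum_congr rfl fun i _ => by rw [show p - (i+1) = p-1-i by omega]
      rw [hidx, hc0, Nat.sub_zero]
      exact add_comm _ _
    calc ‖res A b (u (j*p))‖ = ngObj A b m u k β := hnorm
      _ ≤ ngObj A b m u k γ := hmin γ
      _ = ‖mulVecE (Polynomial.aeval M P) ρ‖ := hγval
      _ ≤ (S * opNorm M ^ p) * ‖ρ‖ :=
          norm_aeval_le hM P (mul_nonneg hS0 (by positivity)) hPbound ρ
      _ = S * (opNorm M ^ p * ‖ρ‖) := by ring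
  -- pass to the infimum
  have hIccne : (Set.Icc (1/c) (1/a)).Nonempty :=
    ⟨1/c, Set.mem_Icc.mpr ⟨le_refl _, one_div_le_one_div_of_le ha0 (le_of_lt hac)⟩⟩
  set Sset : Set ℝ := {t : ℝ | ∃ q : Polynomial ℝ, q.natDegree ≤ m+1 ∧ q.eval 1 = 1 ∧
    t = sSup ((fun x => |q.eval x|) '' Set.Icc (1/c) (1/a))} with hSsetdef
  have hepsdef : eps a c (m+1) = sInf Sset := rfl
  have ht0 : (1:ℝ) ∈ Sset := by
    refine ⟨1, by simp, by simp, ?_⟩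
    rw [show (fun x => |Polynomial.eval x (1 : Polynomial ℝ)|) = fun _ => (1:ℝ) by
      funext x; simp]
    rw [hIccne.image_const, csSup_singleton]
  have hSnonneg : ∀ t ∈ Sset, (0:ℝ) ≤ t := by
    rintro t ⟨q, hqdeg, hq1, rfl⟩
    have hbdd : BddAbove ((fun x => |q.eval x|) '' Set.Icc (1/c) (1/a)) :=
      (isCompact_Icc.image_of_continuousOn ((q.continuous.abs).continuousOn)).bddAbove
    exact le_trans (abs_nonneg _) (le_csSup hbdd (Set.mem_image_of_mem _ hIccne.some_mem))
  have hLq : ∀ t ∈ Sset, ‖res A b (u (j*p))‖ ≤ t * (opNorm M ^ p * ‖ρ‖) := by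
    rintro t ⟨q, hqdeg, hq1, rfl⟩
    exact hq q hqdeg hq1
  have hD : (0:ℝ) ≤ opNorm M ^ p * ‖ρ‖ := by positivity
  rcases eq_or_lt_of_le hD with hD0 | hDpos
  · have := hLq 1 ht0
    rw [← hD0, mul_zero] at this
    calc ‖res A b (u (j*p))‖ ≤ 0 := this
      _ ≤ eps a c (m+1) * opNorm M ^ p * ‖ρ‖ := by
        rw [mul_assoc, ← hD0, mul_zero]
  · have hdiv : ‖res A b (u (j*p))‖ / (opNorm M ^ p * ‖ρ‖) ≤ eps a c (m+1) := by
      rw [hepsdef]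
      refine le_csInf ⟨1, ht0⟩ fun t ht => ?_
      rw [div_le_iff₀ hDpos]
      exact hLq t ht
    rw [div_le_iff₀ hDpos] at hdiv
    calc ‖res A b (u (j*p))‖ ≤ eps a c (m+1) * (opNorm M ^ p * ‖ρ‖) := hdiv
      _ = eps a c (m+1) * opNorm M ^ p * ‖ρ‖ := by ring

lemma eps_nonneg {a c : ℝ} (ha0 : 0 < a) (hac : a ≤ c) (s : ℕ) : 0 ≤ eps a c s := by
  have hIccne : (Set.Icc (1/c) (1/a)).Nonempty :=
    ⟨1/c, Set.mem_Icc.mpr ⟨le_refl _, one_div_le_one_div_of_le ha0 hac⟩⟩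
  refine le_csInf ⟨sSup ((fun x => |Polynomial.eval x (1:Polynomial ℝ)|) ''
    Set.Icc (1/c) (1/a)), 1, by simp, by simp, rfl⟩ ?_
  rintro t ⟨q, hqdeg, hq1, rfl⟩
  have hbdd : BddAbove ((fun x => |q.eval x|) '' Set.Icc (1/c) (1/a)) :=
    (isCompact_Icc.image_of_continuousOn ((q.continuous.abs).continuousOn)).bddAbove
  exact le_trans (abs_nonneg _) (le_csSup hbdd (Set.mem_image_of_mem _ hIccne.some_mem))

/-- aNGMRES(m, p), m < p-1, SPD case:
`‖r_{jp}‖ ≤ (ε(a, b, m+1) ‖M‖^p)^j ‖r₀‖`. -/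
theorem stmt_15 {n m p : ℕ} (hmp : m < p - 1) (A : Matrix (Fin n) (Fin n) ℝ)
    (hA : IsUnit A) (hPD : ((1 : Matrix (Fin n) (Fin n) ℝ) - A).PosDef)
    (a c : ℝ) (hac : a < c)
    (h0 : (0 : ℝ) ∉ Set.Icc a c) (h1 : (1 : ℝ) ∉ Set.Icc a c)
    (hspec : spectrum ℝ ((1 : Matrix (Fin n) (Fin n) ℝ) - A) ⊆ Set.Icc a c)
    (b : EuclideanSpace ℝ (Fin n)) (u : ℕ → EuclideanSpace ℝ (Fin n))
    (hu : aNGMRES A b (m : ℕ∞) p u) :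
    ∀ j : ℕ, 1 ≤ j →
      ‖res A b (u (j * p))‖ ≤
        (eps a c (m+1) * opNorm ((1 : Matrix (Fin n) (Fin n) ℝ) - A) ^ p) ^ j *
          ‖res A b (u 0)‖ := by
  rcases Nat.eq_zero_or_pos n with rfl | hn
  · intro j hj
    have hz : ∀ v : EuclideanSpace ℝ (Fin 0), v = 0 := fun v => by ext i; exact i.elim0
    rw [hz (res A b (u (j*p))), hz (res A b (u 0))]
    simp
  · have hM : ((1 : Matrix (Fin n) (Fin n) ℝ) - A).IsHermitian := hPD.1
    have ha0 : 0 < a := by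
      by_contra h
      push_neg at h
      exact h0 ⟨h, le_trans (le_of_lt (hPD.eigenvalues_pos ⟨0, hn⟩))
        (hspec (hM.eigenvalues_mem_spectrum_real ⟨0, hn⟩)).2⟩
    have hK : 0 ≤ eps a c (m+1) * opNorm ((1:Matrix (Fin n) (Fin n) ℝ) - A) ^ p :=
      mul_nonneg (eps_nonneg ha0 (le_of_lt hac) (m+1)) (pow_nonneg (norm_nonneg _) p)
    intro j hj
    induction j with
    | zero => omega
    | succ j ih =>
      rcases Nat.eq_zero_or_pos j with rfl | hjpos
      · have := step_lemma hn hmp A hPD a c hac h0 hspec b u hu 1 le_rfl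
        simpa using this
      · have hstep := step_lemma hn hmp A hPD a c hac h0 hspec b u hu (j+1) (by omega)
        rw [Nat.add_sub_cancel] at hstep
        calc ‖res A b (u ((j+1) * p))‖ ≤
            eps a c (m+1) * opNorm ((1:Matrix (Fin n) (Fin n) ℝ) - A) ^ p *
              ‖res A b (u (j * p))‖ := hstep
          _ ≤ eps a c (m+1) * opNorm ((1:Matrix (Fin n) (Fin n) ℝ) - A) ^ p *
              ((eps a c (m+1) * opNorm ((1:Matrix (Fin n) (Fin n) ℝ) - A) ^ p) ^ j *
                ‖res A b (u 0)‖) :=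
            mul_le_mul_of_nonneg_left (ih hjpos) hK
          _ = (eps a c (m+1) * opNorm ((1:Matrix (Fin n) (Fin n) ℝ) - A) ^ p) ^ (j+1) *
              ‖res A b (u 0)‖ := by ring


end
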